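/- Suppose the Basic Assumption holds, β ∈ [0,∞), the sequence {θ^ν} is bounded away from zero, and θ^ν·|τ^ν − β| → 0. Then for every (x, y, u, α, λ) ∈ ℝ^n × ℝ^m × ℝ^q × ℝ × ℝ there exists a sequence (x^ν, y^ν, u^ν, α^ν, λ^ν) → (x, y, u, α, λ) such that limsup_{ν→∞} φ^ν(x^ν, y^ν, u^ν, α^ν, λ^ν) ≤ φ_β(x, y, u, α, λ). -/

import Mathlib

open Filter Topology Metric Set

attribute [local instance] Classical.propDecidable

noncomputable section

/-- `ℝ^n` with the Euclidean norm. -/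
abbrev Rn (n : ℕ) : Type := EuclideanSpace ℝ (Fin n)

variable {n m : ℕ} {Q : Type*} [NormedAddCommGroup Q]

/-- `(x, y)` is feasible in the bilevel problem (P): `x ∈ X` and
`y ∈ τ-argmin_{z ∈ Y} { g(x,z) | H(x,z) ∈ D }`. -/
def PFeas (X : Set (Rn n)) (Y : Set (Rn m)) (D : Set Q)
    (g : Rn n × Rn m → ℝ) (H : Rn n × Rn m → Q) (τ : ℝ)
    (x : Rn n) (y : Rn m) : Prop :=
  x ∈ X ∧ y ∈ Y ∧ H (x, y) ∈ D ∧
    ∀ z ∈ Y, H (x, z) ∈ D → g (x, y) ≤ g (x, z) + τ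

/-- The minimum value `𝔪` of (P). -/
def PVal (X : Set (Rn n)) (Y : Set (Rn m)) (D : Set Q)
    (f : Rn n × Rn m → EReal) (g : Rn n × Rn m → ℝ) (H : Rn n × Rn m → Q)
    (τ : ℝ) : EReal :=
  ⨅ (x : Rn n) (y : Rn m) (_ : PFeas X Y D g H τ x y), f (x, y)

/-- Optimal solution of (P): feasible, finite objective value attaining `𝔪`. -/
def POpt (X : Set (Rn n)) (Y : Set (Rn m)) (D : Set Q)
    (f : Rn n × Rn m → EReal) (g : Rn n × Rn m → ℝ) (H : Rn n × Rn m → Q)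
    (τ : ℝ) (x : Rn n) (y : Rn m) : Prop :=
  PFeas X Y D g H τ x y ∧ f (x, y) ≠ ⊤ ∧ f (x, y) = PVal X Y D f g H τ

/-- Feasibility in the alternative problem (P)^ν with data `Yn, gn, Hn, lamBar, τn`. -/
def PnuFeas (X : Set (Rn n)) (Y : Set (Rn m)) (D : Set Q) (Yn : Set (Rn m))
    (gn : Rn n × Rn m → ℝ) (Hn : Rn n × Rn m → Q) (lamBar τn : ℝ)
    (x : Rn n) (y : Rn m) (u : Q) (α lam : ℝ) : Prop :=
  x ∈ X ∧ y ∈ Y ∧ α ≤ 0 ∧ 0 ≤ lam ∧ lam ≤ lamBar ∧ Hn (x, y) + u ∈ D ∧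
    ∀ z ∈ Yn, gn (x, y) + α ≤ gn (x, z) + lam * infDist (Hn (x, z)) D + τn

/-- Objective function of (P)^ν: `f^ν(x,y) + σ^ν ‖u‖ - θ^ν α`. -/
def PnuObj (fn : Rn n × Rn m → EReal) (σn θn : ℝ)
    (x : Rn n) (y : Rn m) (u : Q) (α : ℝ) : EReal :=
  fn (x, y) + ((σn * ‖u‖ - θn * α : ℝ) : EReal)

/-- The minimum value `𝔪^ν` of (P)^ν. -/
def PnuVal (X : Set (Rn n)) (Y : Set (Rn m)) (D : Set Q) (Yn : Set (Rn m))
    (fn : Rn n × Rn m → EReal) (gn : Rn n × Rn m → ℝ) (Hn : Rn n × Rn m → Q)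
    (σn θn lamBar τn : ℝ) : EReal :=
  ⨅ (x : Rn n) (y : Rn m) (u : Q) (α : ℝ) (lam : ℝ)
    (_ : PnuFeas X Y D Yn gn Hn lamBar τn x y u α lam),
    PnuObj fn σn θn x y u α

/-- `ε`-optimal solution of (P)^ν: feasible with finite objective value at most `𝔪^ν + ε`. -/
def PnuEps (X : Set (Rn n)) (Y : Set (Rn m)) (D : Set Q) (Yn : Set (Rn m))
    (fn : Rn n × Rn m → EReal) (gn : Rn n × Rn m → ℝ) (Hn : Rn n × Rn m → Q)
    (σn θn lamBar τn ε : ℝ)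
    (x : Rn n) (y : Rn m) (u : Q) (α lam : ℝ) : Prop :=
  PnuFeas X Y D Yn gn Hn lamBar τn x y u α lam ∧
    PnuObj fn σn θn x y u α ≠ ⊤ ∧
    PnuObj fn σn θn x y u α ≤ PnuVal X Y D Yn fn gn Hn σn θn lamBar τn + (ε : EReal)

/-- The value function `V(x,u) = inf_{y ∈ Y} { g(x,y) | H(x,y) + u ∈ D }`. -/
def Vfun (Y : Set (Rn m)) (D : Set Q)
    (g : Rn n × Rn m → ℝ) (H : Rn n × Rn m → Q)
    (x : Rn n) (u : Q) : EReal :=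
  ⨅ (y : Rn m) (_ : y ∈ Y ∧ H (x, y) + u ∈ D), (g (x, y) : EReal)

/-- The value function `V` is calm at `x` with penalty threshold `lam`. -/
def CalmAtWith (Y : Set (Rn m)) (D : Set Q)
    (g : Rn n × Rn m → ℝ) (H : Rn n × Rn m → Q)
    (x : Rn n) (lam : ℝ) : Prop :=
  0 ≤ lam ∧ ∀ u : Q,
    Vfun Y D g H x 0 - ((lam * ‖u‖ : ℝ) : EReal) ≤ Vfun Y D g H x u

/-- The value function `V` is calm at `x`. -/
def CalmAt (Y : Set (Rn m)) (D : Set Q)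
    (g : Rn n × Rn m → ℝ) (H : Rn n × Rn m → Q) (x : Rn n) : Prop :=
  ∃ lam : ℝ, CalmAtWith Y D g H x lam

/-- The value function `V` is locally calm at `xbar`. -/
def LocallyCalmAt (Y : Set (Rn m)) (D : Set Q)
    (g : Rn n × Rn m → ℝ) (H : Rn n × Rn m → Q) (xbar : Rn n) : Prop :=
  ∃ lam ρ : ℝ, 0 ≤ lam ∧ 0 < ρ ∧
    ∀ x ∈ Metric.closedBall xbar ρ, ∀ u : Q,
      Vfun Y D g H x 0 - ((lam * ‖u‖ : ℝ) : EReal) ≤ Vfun Y D g H x u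

/-- The penalty-based value function `μ(x,λ) = inf_{y ∈ S} [g(x,y) + λ dist(H(x,y), D)]`. -/
def muSet (S : Set (Rn m)) (D : Set Q)
    (g : Rn n × Rn m → ℝ) (H : Rn n × Rn m → Q)
    (x : Rn n) (lam : ℝ) : EReal :=
  ⨅ (y : Rn m) (_ : y ∈ S), ((g (x, y) + lam * infDist (H (x, y)) D : ℝ) : EReal)

/-- The Basic Assumption (Assumption 2.1). -/
structure BasicAssumption (X : Set (Rn n)) (Y : Set (Rn m)) (D : Set Q)
    (Yν : ℕ → Set (Rn m))
    (f : Rn n × Rn m → EReal) (fν : ℕ → Rn n × Rn m → EReal)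
    (g : Rn n × Rn m → ℝ) (gν : ℕ → Rn n × Rn m → ℝ)
    (H : Rn n × Rn m → Q) (Hν : ℕ → Rn n × Rn m → Q)
    (σ θ lamBar τν δ η : ℕ → ℝ) : Prop where
  X_nonempty : X.Nonempty
  X_closed : IsClosed X
  Y_nonempty : Y.Nonempty
  Y_closed : IsClosed Y
  D_nonempty : D.Nonempty
  D_closed : IsClosed D
  Yν_nonempty : ∀ ν, (Yν ν).Nonempty
  Yν_subset : ∀ ν, Yν ν ⊆ Y
  Yν_conv : ∀ y : Rn m,
    Tendsto (fun ν => infDist y (Yν ν)) atTop (𝓝 (infDist y Y))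
  δ_lim : Tendsto δ atTop (𝓝 0)
  g_err : ∀ ν, ∀ x ∈ X, ∀ y ∈ Y, |gν ν (x, y) - g (x, y)| ≤ δ ν
  g_cont : ContinuousOn g (X ×ˢ Y)
  η_lim : Tendsto η atTop (𝓝 0)
  H_err : ∀ ν, ∀ x ∈ X, ∀ y ∈ Y,
    |infDist (Hν ν (x, y)) D - infDist (H (x, y)) D| ≤ η ν
  H_cont : ContinuousOn H (X ×ˢ Y)
  f_ne_bot : ∀ p, f p ≠ ⊥
  fν_ne_bot : ∀ ν p, fν ν p ≠ ⊥
  f_limsup : ∀ x ∈ X, ∀ y ∈ Y,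
    limsup (fun ν => fν ν (x, y)) atTop ≤ f (x, y)
  f_liminf : ∀ x ∈ X, ∀ y ∈ Y, ∀ (xs : ℕ → Rn n) (ys : ℕ → Rn m),
    (∀ ν, xs ν ∈ X) → (∀ ν, ys ν ∈ Y) →
    Tendsto xs atTop (𝓝 x) → Tendsto ys atTop (𝓝 y) →
    f (x, y) ≤ liminf (fun ν => fν ν (xs ν, ys ν)) atTop
  σ_nonneg : ∀ ν, 0 ≤ σ ν
  θ_nonneg : ∀ ν, 0 ≤ θ ν
  lamBar_nonneg : ∀ ν, 0 ≤ lamBar ν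
  τν_nonneg : ∀ ν, 0 ≤ τν ν
  lamBar_top : Tendsto lamBar atTop atTop
  ση_lim : Tendsto (fun ν => σ ν * η ν) atTop (𝓝 0)
  θlamη_lim : Tendsto (fun ν => θ ν * lamBar ν * η ν) atTop (𝓝 0)
  θδ_lim : Tendsto (fun ν => θ ν * δ ν) atTop (𝓝 0)

/-- The extended real-valued representation `φ^ν` of (P)^ν. -/
def phiNu (X : Set (Rn n)) (Y : Set (Rn m)) (D : Set Q) (Yn : Set (Rn m))
    (fn : Rn n × Rn m → EReal) (gn : Rn n × Rn m → ℝ) (Hn : Rn n × Rn m → Q)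
    (σn θn lamBar τn : ℝ)
    (x : Rn n) (y : Rn m) (u : Q) (α lam : ℝ) : EReal :=
  if x ∈ X ∧ y ∈ Y ∧ α ≤ 0 ∧ 0 ≤ lam ∧ lam ≤ lamBar ∧ Hn (x, y) + u ∈ D ∧
      ((gn (x, y) + α : ℝ) : EReal) ≤ muSet Yn D gn Hn x lam + (τn : EReal)
  then fn (x, y) + ((σn * ‖u‖ - θn * α : ℝ) : EReal) else ⊤

/-- The extended real-valued function `φ_β` representing a restriction of (P). -/
def phiBeta (X : Set (Rn n)) (Y : Set (Rn m)) (D : Set Q)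
    (f : Rn n × Rn m → EReal) (g : Rn n × Rn m → ℝ) (H : Rn n × Rn m → Q)
    (β : ℝ)
    (x : Rn n) (y : Rn m) (u : Q) (α lam : ℝ) : EReal :=
  if x ∈ X ∧ y ∈ Y ∧ u = 0 ∧ α = 0 ∧ 0 ≤ lam ∧ H (x, y) ∈ D ∧
      (g (x, y) : EReal) ≤ muSet Y D g H x lam + (β : EReal)
  then f (x, y) else ⊤

/-- Lemma 5.4 (limsup property): for every point there is a sequence converging to it
along which `limsup φ^ν ≤ φ_β`. -/
theorem phiNu_limsup_le_phiBeta
    [NormedSpace ℝ Q] [FiniteDimensional ℝ Q]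
    (X : Set (Rn n)) (Y : Set (Rn m)) (D : Set Q) (Yν : ℕ → Set (Rn m))
    (f : Rn n × Rn m → EReal) (fν : ℕ → Rn n × Rn m → EReal)
    (g : Rn n × Rn m → ℝ) (gν : ℕ → Rn n × Rn m → ℝ)
    (H : Rn n × Rn m → Q) (Hν : ℕ → Rn n × Rn m → Q)
    (σ θ lamBar τν δ η : ℕ → ℝ)
    (ba : BasicAssumption X Y D Yν f fν g gν H Hν σ θ lamBar τν δ η)
    (β : ℝ) (hβ : 0 ≤ β)
    (hθbdd : ∃ c : ℝ, 0 < c ∧ ∀ ν, c ≤ θ ν)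
    (hrate : Tendsto (fun ν => θ ν * |τν ν - β|) atTop (𝓝 0))
    (x : Rn n) (y : Rn m) (u : Q) (α lam : ℝ) :
    ∃ (xs : ℕ → Rn n) (ys : ℕ → Rn m) (us : ℕ → Q) (αs lams : ℕ → ℝ),
      Tendsto xs atTop (𝓝 x) ∧ Tendsto ys atTop (𝓝 y) ∧
      Tendsto us atTop (𝓝 u) ∧ Tendsto αs atTop (𝓝 α) ∧
      Tendsto lams atTop (𝓝 lam) ∧
      limsup (fun ν => phiNu X Y D (Yν ν) (fν ν) (gν ν) (Hν ν)
          (σ ν) (θ ν) (lamBar ν) (τν ν) (xs ν) (ys ν) (us ν) (αs ν) (lams ν)) atTop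
        ≤ phiBeta X Y D f g H β x y u α lam := by
  classical
  by_cases hcond : x ∈ X ∧ y ∈ Y ∧ u = 0 ∧ α = 0 ∧ 0 ≤ lam ∧ H (x, y) ∈ D ∧
      (g (x, y) : EReal) ≤ muSet Y D g H x lam + (β : EReal)
  · obtain ⟨hx, hy, hu, hα, hlam, hH, hg⟩ := hcond
    obtain ⟨c, hc, hcθ⟩ := hθbdd
    -- basic nonnegativity of δ, η
    have hδ0 : ∀ ν, 0 ≤ δ ν := fun ν =>
      le_trans (abs_nonneg _) (ba.g_err ν x hx y hy)
    have hη0 : ∀ ν, 0 ≤ η ν := fun ν =>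
      le_trans (abs_nonneg _) (ba.H_err ν x hx y hy)
    -- nearest points in D to Hν (x,y)
    have hd : ∀ ν : ℕ, ∃ d ∈ D, infDist (Hν ν (x, y)) D = dist (Hν ν (x, y)) d :=
      fun ν => ba.D_closed.exists_infDist_eq_dist ba.D_nonempty _
    choose d hdD hdist using hd
    set us : ℕ → Q := fun ν => d ν - Hν ν (x, y) with hus
    set αs : ℕ → ℝ := fun ν => min 0 (τν ν - β - 2 * δ ν - lam * η ν) with hαs
    set lams : ℕ → ℝ := fun ν => min lam (lamBar ν) with hlams
    -- norm of us
    have husnorm : ∀ ν, ‖us ν‖ = infDist (Hν ν (x, y)) D := by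
      intro ν
      rw [hdist ν, dist_eq_norm, ← norm_neg]
      simp [hus, neg_sub]
    have husle : ∀ ν, ‖us ν‖ ≤ η ν := by
      intro ν
      rw [husnorm ν]
      have h1 := ba.H_err ν x hx y hy
      have h2 : infDist (H (x, y)) D = 0 := infDist_zero_of_mem hH
      rw [h2, sub_zero] at h1
      exact (le_abs_self _).trans h1
    -- |τν - β| → 0
    have hτβ : Tendsto (fun ν => |τν ν - β|) atTop (𝓝 0) := by
      apply squeeze_zero (fun ν => abs_nonneg _) (g := fun ν => c⁻¹ * (θ ν * |τν ν - β|))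
      · intro ν
        rw [le_inv_mul_iff₀ hc]
        exact mul_le_mul_of_nonneg_right (hcθ ν) (abs_nonneg _)
      · simpa using hrate.const_mul c⁻¹
    have hτβ' : Tendsto (fun ν => τν ν - β) atTop (𝓝 0) := by
      apply squeeze_zero_norm _ hτβ
      intro ν; simp [Real.norm_eq_abs]
    -- convergence of the sequences
    have hust : Tendsto us atTop (𝓝 u) := by
      rw [hu]
      exact squeeze_zero_norm husle ba.η_lim
    have hαst : Tendsto αs atTop (𝓝 α) := by
      rw [hα]
      have : Tendsto (fun ν => τν ν - β - 2 * δ ν - lam * η ν) atTop (𝓝 0) := by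
        have := (hτβ'.sub ((ba.δ_lim.const_mul 2))).sub (ba.η_lim.const_mul lam)
        simpa using this
      have h2 := (tendsto_const_nhds : Tendsto (fun _ : ℕ => (0:ℝ)) atTop (𝓝 0)).min this
      simpa using h2
    have hev : ∀ᶠ ν in atTop, lam ≤ lamBar ν := ba.lamBar_top.eventually_ge_atTop lam
    have hlamst : Tendsto lams atTop (𝓝 lam) := by
      apply Tendsto.congr' _ (tendsto_const_nhds (x := lam))
      filter_upwards [hev] with ν hν
      simp [hlams, min_eq_left hν]
    refine ⟨fun _ => x, fun _ => y, us, αs, lams, tendsto_const_nhds, tendsto_const_nhds,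
      hust, hαst, hlamst, ?_⟩
    -- the residual rν
    set r : ℕ → ℝ := fun ν => σ ν * ‖us ν‖ - θ ν * αs ν with hr
    -- eventually, phiNu equals fν + r
    have hphi : ∀ᶠ ν in atTop,
        phiNu X Y D (Yν ν) (fν ν) (gν ν) (Hν ν) (σ ν) (θ ν) (lamBar ν) (τν ν)
          x y (us ν) (αs ν) (lams ν) = fν ν (x, y) + ((r ν : ℝ) : EReal) := by
      filter_upwards [hev] with ν hν
      have hlamseq : lams ν = lam := min_eq_left hν
      have hgy : ∀ z ∈ Y, g (x, y) ≤ g (x, z) + lam * infDist (H (x, z)) D + β := by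
        intro z hz
        have h1 : muSet Y D g H x lam ≤ ((g (x, z) + lam * infDist (H (x, z)) D : ℝ) : EReal) :=
          iInf₂_le z hz
        have h2 : (g (x, y) : EReal) ≤
            ((g (x, z) + lam * infDist (H (x, z)) D + β : ℝ) : EReal) := by
          refine hg.trans ?_
          rw [EReal.coe_add]
          exact add_le_add_left h1 _
        exact_mod_cast h2
      have hmu : ((g (x, y) - β - δ ν - lam * η ν : ℝ) : EReal) ≤
          muSet (Yν ν) D (gν ν) (Hν ν) x lam := by
        refine le_iInf fun z => le_iInf fun hz => ?_
        have hzY : z ∈ Y := ba.Yν_subset ν hz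
        have hg1 : g (x, z) - δ ν ≤ gν ν (x, z) := by
          have := ba.g_err ν x hx z hzY
          rw [abs_sub_comm] at this
          linarith [(abs_le.1 this).2]
        have hH1 : infDist (H (x, z)) D - η ν ≤ infDist (Hν ν (x, z)) D := by
          have := ba.H_err ν x hx z hzY
          rw [abs_sub_comm] at this
          linarith [(abs_le.1 this).2]
        have key : g (x, y) - β - δ ν - lam * η ν ≤
            gν ν (x, z) + lam * infDist (Hν ν (x, z)) D := by
          have h3 := hgy z hzY
          have h4 : lam * (infDist (H (x, z)) D - η ν) ≤ lam * infDist (Hν ν (x, z)) D :=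
            mul_le_mul_of_nonneg_left hH1 hlam
          nlinarith
        exact_mod_cast key
      have hfeas : x ∈ X ∧ y ∈ Y ∧ αs ν ≤ 0 ∧ 0 ≤ lams ν ∧ lams ν ≤ lamBar ν ∧
          Hν ν (x, y) + us ν ∈ D ∧
          ((gν ν (x, y) + αs ν : ℝ) : EReal) ≤
            muSet (Yν ν) D (gν ν) (Hν ν) x (lams ν) + ((τν ν : ℝ) : EReal) := by
        refine ⟨hx, hy, min_le_left _ _, le_min hlam (ba.lamBar_nonneg ν), min_le_right _ _,
          ?_, ?_⟩
        · have : Hν ν (x, y) + us ν = d ν := by simp [hus]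
          rw [this]; exact hdD ν
        · rw [hlamseq]
          have hgν : gν ν (x, y) ≤ g (x, y) + δ ν := by
            have := ba.g_err ν x hx y hy
            linarith [(abs_le.1 this).2]
          have hαν : αs ν ≤ τν ν - β - 2 * δ ν - lam * η ν := min_le_right _ _
          have hle : gν ν (x, y) + αs ν ≤ (g (x, y) - β - δ ν - lam * η ν) + τν ν := by
            linarith
          calc ((gν ν (x, y) + αs ν : ℝ) : EReal)
              ≤ (((g (x, y) - β - δ ν - lam * η ν) + τν ν : ℝ) : EReal) := by
                exact_mod_cast hle
            _ = ((g (x, y) - β - δ ν - lam * η ν : ℝ) : EReal) + ((τν ν : ℝ) : EReal) := by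
                rw [EReal.coe_add]
            _ ≤ muSet (Yν ν) D (gν ν) (Hν ν) x lam + ((τν ν : ℝ) : EReal) :=
                add_le_add_left hmu _
      rw [phiNu, if_pos hfeas]
    -- r → 0
    have hr0 : Tendsto r atTop (𝓝 0) := by
      have hS : Tendsto (fun ν => σ ν * η ν + (θ ν * |τν ν - β| + 2 * (θ ν * δ ν)
          + θ ν * lamBar ν * η ν)) atTop (𝓝 0) := by
        have := ba.ση_lim.add ((hrate.add ((ba.θδ_lim.const_mul 2))).add ba.θlamη_lim)
        simpa using this
      apply squeeze_zero' _ _ hS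
      · filter_upwards with ν
        have h1 : 0 ≤ σ ν * ‖us ν‖ := mul_nonneg (ba.σ_nonneg ν) (norm_nonneg _)
        have h2 : θ ν * αs ν ≤ 0 :=
          mul_nonpos_of_nonneg_of_nonpos (ba.θ_nonneg ν) (min_le_left _ _)
        simp only [hr]; linarith
      · filter_upwards [hev] with ν hν
        have h1 : σ ν * ‖us ν‖ ≤ σ ν * η ν :=
          mul_le_mul_of_nonneg_left (husle ν) (ba.σ_nonneg ν)
        have h2 : -αs ν ≤ |τν ν - β| + 2 * δ ν + lam * η ν := by
          simp only [hαs]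
          rw [← max_neg_neg, neg_zero]
          apply max_le
          · have := abs_nonneg (τν ν - β)
            have := hδ0 ν
            have := mul_nonneg hlam (hη0 ν)
            linarith
          · have h3 : -(τν ν - β) ≤ |τν ν - β| := neg_le_abs _
            linarith
        have h4 : θ ν * (-αs ν) ≤ θ ν * (|τν ν - β| + 2 * δ ν + lam * η ν) :=
          mul_le_mul_of_nonneg_left h2 (ba.θ_nonneg ν)
        have h5 : θ ν * lam * η ν ≤ θ ν * lamBar ν * η ν := by
          apply mul_le_mul_of_nonneg_right _ (hη0 ν)
          exact mul_le_mul_of_nonneg_left hν (ba.θ_nonneg ν)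
        simp only [hr]; nlinarith [ba.θ_nonneg ν, hη0 ν, hδ0 ν]
    -- limsup of coe r is 0
    have hrE : Tendsto (fun ν => ((r ν : ℝ) : EReal)) atTop (𝓝 (0 : EReal)) := by
      have := continuous_coe_real_ereal.continuousAt.tendsto.comp hr0
      rw [← EReal.coe_zero]; exact this
    have hrls : limsup (fun ν => ((r ν : ℝ) : EReal)) atTop = (0 : EReal) :=
      hrE.limsup_eq
    -- final limsup bound
    have hphiB : phiBeta X Y D f g H β x y u α lam = f (x, y) := by
      rw [phiBeta, if_pos ⟨hx, hy, hu, hα, hlam, hH, hg⟩]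
    rw [hphiB]
    have hls : limsup (fun ν => fν ν (x, y) + ((r ν : ℝ) : EReal)) atTop ≤ f (x, y) := by
      have hadd : limsup (fun ν => fν ν (x, y) + ((r ν : ℝ) : EReal)) atTop ≤
          limsup (fun ν => fν ν (x, y)) atTop + limsup (fun ν => ((r ν : ℝ) : EReal)) atTop := by
        apply EReal.limsup_add_le
        · right; rw [hrls]; exact ne_of_beq_false rfl
        · right; rw [hrls]; exact ne_of_beq_false rfl
      rw [hrls, add_zero] at hadd
      exact hadd.trans (ba.f_limsup x hx y hy)
    refine le_trans (limsup_le_limsup ?_) hls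
    filter_upwards [hphi] with ν hν
    exact le_of_eq hν
  · refine ⟨fun _ => x, fun _ => y, fun _ => u, fun _ => α, fun _ => lam,
      tendsto_const_nhds, tendsto_const_nhds, tendsto_const_nhds,
      tendsto_const_nhds, tendsto_const_nhds, ?_⟩
    rw [phiBeta, if_neg hcond]
    exact le_top
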